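/- Let β > 1 be irrational, n ≥ 2 an integer, and suppose n²β² = p·n·β + q with integers p ≥ q ≥ 1 and n ≤ p. Write p = n·s + t with s ≥ 1, 0 ≤ t ≤ n-1. If t ≤ n - 2, then β + 1/n < ⌊β⌋ + 1, so ⌊β + 1/n⌋ = ⌊β⌋. -/
import Mathlib


theorem stmt_9 (β : ℝ) (hirr : Irrational β) (hβ : 1 < β)
    (n p q s t : ℤ) (hn : 2 ≤ n) (hq : 1 ≤ q) (hpq : q ≤ p) (hnp : n ≤ p)
    (heq : (n : ℝ) ^ 2 * β ^ 2 = (p : ℝ) * (n : ℝ) * β + (q : ℝ))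
    (hdiv : p = n * s + t) (hs : 1 ≤ s) (ht : 0 ≤ t) (ht' : t ≤ n - 1)
    (htsmall : t ≤ n - 2) :
    β + 1 / (n : ℝ) < (⌊β⌋ : ℝ) + 1 ∧ ⌊β + 1 / (n : ℝ)⌋ = ⌊β⌋ := by
  have hn' : (2:ℝ) ≤ (n:ℝ) := by exact_mod_cast hn
  have hnpos : (0:ℝ) < (n:ℝ) := by linarith
  have hq' : (1:ℝ) ≤ (q:ℝ) := by exact_mod_cast hq
  have hpq' : (q:ℝ) ≤ (p:ℝ) := by exact_mod_cast hpq
  have hnp' : (n:ℝ) ≤ (p:ℝ) := by exact_mod_cast hnp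
  have hdiv' : (p:ℝ) = n * s + t := by exact_mod_cast hdiv
  have hs' : (1:ℝ) ≤ (s:ℝ) := by exact_mod_cast hs
  have ht0 : (0:ℝ) ≤ (t:ℝ) := by exact_mod_cast ht
  have hts : (t:ℝ) ≤ (n:ℝ) - 2 := by
    have : (t:ℝ) ≤ ((n - 2 : ℤ) : ℝ) := by exact_mod_cast htsmall
    push_cast at this; linarith
  have hxpos : (0:ℝ) < (n:ℝ) * β := by nlinarith
  -- p < nβ
  have h1 : (p:ℝ) < (n:ℝ) * β := by nlinarith
  -- nβ < p + 1
  have h2 : (n:ℝ) * β < (p:ℝ) + 1 := by nlinarith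
  -- floor β = s
  have hβs : (s:ℝ) < β := by nlinarith
  have hβs1 : β < (s:ℝ) + 1 := by nlinarith
  have hfloor : ⌊β⌋ = s := by
    rw [Int.floor_eq_iff]
    constructor
    · exact le_of_lt hβs
    · push_cast; linarith
  rw [hfloor]
  have hlt : β + 1 / (n : ℝ) < (s:ℝ) + 1 := by
    have key : (n:ℝ) * (β + 1 / n) < (n:ℝ) * ((s:ℝ)+1) := by
      rw [mul_add, mul_one_div, div_self (ne_of_gt hnpos)]
      nlinarith
    exact lt_of_mul_lt_mul_left key (le_of_lt hnpos)
  refine ⟨hlt, ?_⟩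
  rw [Int.floor_eq_iff]
  constructor
  · have : (0:ℝ) < 1 / n := by positivity
    linarith
  · push_cast; linarith
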